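/- Let a, b > 0, m = a/(a+b), and λ > 0. Then the supremum over s ∈ [m, 1) of (λ·(s − m) − (a+b)·kl(m, s)) is attained at s* = (λ − (a+b) + √((λ − (a+b))² + 4λa))/(2λ), which lies in [m, 1). -/

import Mathlib

open MeasureTheory
open scoped ENNReal

/-- The Beta distribution with parameters `a, b > 0`: the probability measure on `[0,1] ⊆ ℝ`
with density `x^(a−1)·(1−x)^(b−1)/B(a,b)`, where `B(a,b) = Γ(a)·Γ(b)/Γ(a+b)`. -/
noncomputable def betaMeasure (a b : ℝ) : Measure ℝ :=
  (volume.restrict (Set.Icc (0 : ℝ) 1)).withDensity fun x =>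
    ENNReal.ofReal
      (x ^ (a - 1) * (1 - x) ^ (b - 1) / (Real.Gamma a * Real.Gamma b / Real.Gamma (a + b)))

/-- For `p, q ∈ (0,1)`, `kl(p, q) = p·log(p/q) + (1−p)·log((1−p)/(1−q))`;
note that `kl(p, p) = 0` holds automatically. -/
noncomputable def klBer (p q : ℝ) : ℝ :=
  p * Real.log (p / q) + (1 - p) * Real.log ((1 - p) / (1 - q))

set_option maxHeartbeats 800000 in
/-- Let `a, b > 0`, `m = a/(a+b)`, and `λ > 0`. Then the supremum over
`s ∈ [m, 1)` of `(λ·(s − m) − (a+b)·kl(m, s))` is attained at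
`s* = (λ − (a+b) + √((λ − (a+b))² + 4λa))/(2λ)`, which lies in `[m, 1)`. -/
theorem stmt15 (a b : ℝ) (ha : 0 < a) (hb : 0 < b) (lam : ℝ) (hlam : 0 < lam) :
    (lam - (a + b) + Real.sqrt ((lam - (a + b)) ^ 2 + 4 * lam * a)) / (2 * lam) ∈
        Set.Ico (a / (a + b)) 1 ∧
      IsMaxOn (fun s => lam * (s - a / (a + b)) - (a + b) * klBer (a / (a + b)) s)
        (Set.Ico (a / (a + b)) 1)
        ((lam - (a + b) + Real.sqrt ((lam - (a + b)) ^ 2 + 4 * lam * a)) / (2 * lam)) := by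
  set c := a + b with hc
  have hc0 : 0 < c := by positivity
  set m := a / c with hm
  have hm0 : 0 < m := by positivity
  have hm1 : m < 1 := by rw [hm, div_lt_one hc0]; linarith
  have hcm : c * m = a := by rw [hm]; field_simp
  have hcm' : c * (1 - m) = b := by linear_combination -hcm + hc
  set D := (lam - c) ^ 2 + 4 * lam * a with hD
  have hD0 : 0 ≤ D := by positivity
  have hsq : Real.sqrt D ^ 2 = D := Real.sq_sqrt hD0
  set t := (lam - c + Real.sqrt D) / (2 * lam) with ht
  have ht1 : t < 1 := by
    rw [ht, div_lt_one (by positivity)]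
    have h1 : Real.sqrt D < lam + c := by
      rw [show lam + c = Real.sqrt ((lam + c) ^ 2) from (Real.sqrt_sq (by positivity)).symm]
      apply Real.sqrt_lt_sqrt hD0
      nlinarith
    linarith
  have htm : m ≤ t := by
    rw [ht, le_div_iff₀ (by positivity)]
    have hx : 2 * lam * m - (lam - c) ≤ Real.sqrt D := by
      calc 2 * lam * m - (lam - c) ≤ |2 * lam * m - (lam - c)| := le_abs_self _
        _ = Real.sqrt ((2 * lam * m - (lam - c)) ^ 2) := (Real.sqrt_sq_eq_abs _).symm
        _ ≤ Real.sqrt D := by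
            apply Real.sqrt_le_sqrt
            rw [hD]
            nlinarith [mul_pos (mul_pos hlam hlam) (mul_pos hm0 (by linarith : (0:ℝ) < 1 - m))]
    linarith
  have ht0 : 0 < t := lt_of_lt_of_le hm0 htm
  have h1t : 0 < 1 - t := by linarith
  have hroot : lam * t ^ 2 = (lam - c) * t + a := by
    rw [ht]
    field_simp
    nlinarith [hsq]
  have hderiv : lam * (t * (1 - t)) + a * (1 - t) - b * t = 0 := by
    linear_combination (-1) * hroot + t * hc
  refine ⟨⟨htm, ht1⟩, ?_⟩
  rw [isMaxOn_iff]
  intro s hs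
  obtain ⟨hsm, hs1⟩ := hs
  have hs0 : 0 < s := lt_of_lt_of_le hm0 hsm
  have h1s : 0 < 1 - s := by linarith
  simp only [klBer]
  rw [Real.log_div hm0.ne' hs0.ne', Real.log_div hm0.ne' ht0.ne',
      Real.log_div (by linarith : (1:ℝ) - m ≠ 0) h1s.ne',
      Real.log_div (by linarith : (1:ℝ) - m ≠ 0) h1t.ne']
  have hA : a * t * (Real.log s - Real.log t) ≤ a * (s - t) := by
    have h := Real.log_le_sub_one_of_pos (div_pos hs0 ht0)
    rw [Real.log_div hs0.ne' ht0.ne'] at h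
    have h2 := mul_le_mul_of_nonneg_left h (mul_nonneg ha.le ht0.le)
    calc a * t * (Real.log s - Real.log t) ≤ a * t * (s / t - 1) := h2
      _ = a * (s - t) := by field_simp
  have hB : b * (1 - t) * (Real.log (1 - s) - Real.log (1 - t)) ≤ b * (t - s) := by
    have h := Real.log_le_sub_one_of_pos (div_pos h1s h1t)
    rw [Real.log_div h1s.ne' h1t.ne'] at h
    have h2 := mul_le_mul_of_nonneg_left h (mul_nonneg hb.le h1t.le)
    calc b * (1 - t) * (Real.log (1 - s) - Real.log (1 - t)) ≤ b * (1 - t) * ((1 - s) / (1 - t) - 1) := h2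
      _ = b * (t - s) := by field_simp; ring
  have hkey : a * (s - t) * (1 - t) - b * (s - t) * t = -(lam * (s - t) * (t * (1 - t))) := by
    linear_combination (s - t) * hderiv
  have hfin : lam * (s - t) + a * (Real.log s - Real.log t)
      + b * (Real.log (1 - s) - Real.log (1 - t)) ≤ 0 := by
    nlinarith [mul_le_mul_of_nonneg_right hA h1t.le, mul_le_mul_of_nonneg_right hB ht0.le,
      hkey, mul_pos ht0 h1t]
  have hrew : ∀ x y : ℝ, c * (m * x + (1 - m) * y) = a * x + b * y := by
    intro x y
    rw [mul_add, ← mul_assoc, ← mul_assoc, hcm, hcm']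
  rw [hrew, hrew]
  linarith [hfin]
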